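/- arXiv:1206.0102 — 2 statements merged into one kernel-verified Lean document; each statement's English description precedes it below -/
import Mathlib

section
/- Let A ∈ ℂ^{n×p} be injective, b ∈ ℝⁿ with b_i ≠ 0 for all i = 1,…,n, and assume there exists x ∈ ℂ^p with |Ax| = b. Let M = diag(b)(I − AA†)diag(b) and B = diag(b) A†* A† diag(b). If the PhaseLift problem (minimize Tr(X) over X ∈ H_p with X ⪰ 0 and Tr(a_i a_i* X) = b_i² for all i) has a unique optimal solution and this solution has rank one, then the PhaseCutMod problem (minimize Tr(BU) over U ∈ H_n with U ⪰ 0, diag(U) = 1 and Tr(MU) = 0) has a unique optimal solution and this solution has rank one. -/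
open Matrix ComplexOrder

/-- The feasible set of PhaseLift: positive semidefinite Hermitian `X` with
`Tr(aᵢaᵢ*X) = bᵢ²` for every row `aᵢ*` of `A`. -/
def phaseLiftFeasible {n p : ℕ} (A : Matrix (Fin n) (Fin p) ℂ) (b : Fin n → ℝ) :
    Set (Matrix (Fin p) (Fin p) ℂ) :=
  {X | X.PosSemidef ∧
    ∀ i, Matrix.trace (Matrix.vecMulVec (star (A i)) (A i) * X) = ((b i : ℂ)) ^ 2}

/-- The feasible set of PhaseCutMod: `U ⪰ 0`, `diag(U) = 1`, `Tr(MU) = 0` where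
`M = diag(b)(I − AA†)diag(b)`. -/
def phaseCutModFeasible {n p : ℕ} (A : Matrix (Fin n) (Fin p) ℂ)
    (Ad : Matrix (Fin p) (Fin n) ℂ) (b : Fin n → ℝ) :
    Set (Matrix (Fin n) (Fin n) ℂ) :=
  {U | U.PosSemidef ∧ (∀ i, U i i = 1) ∧
    Matrix.trace ((Matrix.diagonal fun i => (b i : ℂ)) * (1 - A * Ad) *
      (Matrix.diagonal fun i => (b i : ℂ)) * U) = 0}

lemma trace_vmv {n p : ℕ} (A : Matrix (Fin n) (Fin p) ℂ)
    (X : Matrix (Fin p) (Fin p) ℂ) (i : Fin n) :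
    Matrix.trace (Matrix.vecMulVec (star (A i)) (A i) * X) = (A * X * Aᴴ) i i := by
  simp only [Matrix.trace, Matrix.diag_apply, Matrix.mul_apply, Matrix.vecMulVec_apply,
    Matrix.conjTranspose_apply, Pi.star_apply, Finset.sum_mul, Finset.mul_sum]
  apply Finset.sum_congr rfl
  intro j _
  apply Finset.sum_congr rfl
  intro k _
  ring

lemma trace_hmul_self_zero {n : ℕ} (M : Matrix (Fin n) (Fin n) ℂ)
    (h : Matrix.trace (Mᴴ * M) = 0) : M = 0 := by
  have hre : ∑ i, ∑ j, Complex.normSq (M j i) = 0 := by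
    have := congrArg Complex.re h
    simpa [Matrix.trace, Matrix.mul_apply, Matrix.conjTranspose_apply,
      Complex.ext_iff, ← Complex.normSq_eq_conj_mul_self] using this
  ext i j
  have h1 : ∀ i ∈ Finset.univ, (0:ℝ) ≤ ∑ j, Complex.normSq (M j i) :=
    fun i _ => Finset.sum_nonneg fun j _ => Complex.normSq_nonneg _
  have h2 := (Finset.sum_eq_zero_iff_of_nonneg h1).mp hre j (Finset.mem_univ _)
  have h3 := (Finset.sum_eq_zero_iff_of_nonneg
    (fun k _ => Complex.normSq_nonneg (M k j))).mp h2 i (Finset.mem_univ _)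
  simpa using Complex.normSq_eq_zero.mp h3

/-- Under injectivity of `A`, `bᵢ ≠ 0` and solvability of `|Ax| = b`:
if PhaseLift (minimize `Tr(X)` over its feasible set) has a unique optimal solution and
this solution has rank one, then PhaseCutMod (minimize `Tr(BU)`, with
`B = diag(b) A†* A† diag(b)`, over its feasible set) has a unique optimal solution and
this solution has rank one. -/
theorem phaselift_tight_implies_phasecutmod_tight {n p : ℕ}
    (A : Matrix (Fin n) (Fin p) ℂ) (Ad : Matrix (Fin p) (Fin n) ℂ)
    (hPenrose : A * Ad * A = A ∧ Ad * A * Ad = Ad ∧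
      (A * Ad)ᴴ = A * Ad ∧ (Ad * A)ᴴ = Ad * A)
    (hinj : Function.Injective A.mulVec)
    (b : Fin n → ℝ) (hb : ∀ i, b i ≠ 0)
    (x : Fin p → ℂ) (hx : ∀ i, ‖A.mulVec x i‖ = b i)
    (hPL : ∃ Xs ∈ phaseLiftFeasible A b,
      Xs.rank = 1 ∧
      (∀ X ∈ phaseLiftFeasible A b, (Matrix.trace Xs).re ≤ (Matrix.trace X).re) ∧
      (∀ X ∈ phaseLiftFeasible A b,
        (∀ Y ∈ phaseLiftFeasible A b, (Matrix.trace X).re ≤ (Matrix.trace Y).re) →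
        X = Xs)) :
    ∃ Us ∈ phaseCutModFeasible A Ad b,
      Us.rank = 1 ∧
      (∀ U ∈ phaseCutModFeasible A Ad b,
        (Matrix.trace ((Matrix.diagonal fun i => (b i : ℂ)) * Adᴴ * Ad *
            (Matrix.diagonal fun i => (b i : ℂ)) * Us)).re ≤
          (Matrix.trace ((Matrix.diagonal fun i => (b i : ℂ)) * Adᴴ * Ad *
            (Matrix.diagonal fun i => (b i : ℂ)) * U)).re) ∧
      (∀ U ∈ phaseCutModFeasible A Ad b,
        (∀ W ∈ phaseCutModFeasible A Ad b,
          (Matrix.trace ((Matrix.diagonal fun i => (b i : ℂ)) * Adᴴ * Ad *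
              (Matrix.diagonal fun i => (b i : ℂ)) * U)).re ≤
            (Matrix.trace ((Matrix.diagonal fun i => (b i : ℂ)) * Adᴴ * Ad *
              (Matrix.diagonal fun i => (b i : ℂ)) * W)).re) →
        U = Us) := by
  classical
  obtain ⟨hA1, hA2, hA3, hA4⟩ := hPenrose
  obtain ⟨Xs, hXsF, hXsRank, hXsOpt, hXsUniq⟩ := hPL
  set D : Matrix (Fin n) (Fin n) ℂ := Matrix.diagonal fun i => (b i : ℂ) with hDdef
  set Dinv : Matrix (Fin n) (Fin n) ℂ := Matrix.diagonal fun i => ((b i : ℂ))⁻¹ with hDinvdef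
  have hbne : ∀ i, ((b i : ℂ)) ≠ 0 := fun i => Complex.ofReal_ne_zero.mpr (hb i)
  have hDH : Dᴴ = D := by
    rw [hDdef]
    ext i j
    simp only [Matrix.conjTranspose_apply, Matrix.diagonal_apply,
      apply_ite (star : ℂ → ℂ), Complex.star_def, Complex.conj_ofReal, star_zero, eq_comm]
    split_ifs with h
    · subst h; rfl
    · rfl
  have hDinvH : Dinvᴴ = Dinv := by
    rw [hDinvdef]
    ext i j
    simp only [Matrix.conjTranspose_apply, Matrix.diagonal_apply,
      apply_ite (star : ℂ → ℂ), star_inv₀, Complex.star_def, Complex.conj_ofReal,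
      star_zero, eq_comm]
    split_ifs with h
    · subst h; rfl
    · rfl
  have hDDinv : D * Dinv = 1 := by
    rw [hDdef, hDinvdef, Matrix.diagonal_mul_diagonal]
    have : (fun i => (b i : ℂ) * ((b i : ℂ))⁻¹) = fun _ => (1:ℂ) :=
      funext fun i => mul_inv_cancel₀ (hbne i)
    rw [this, Matrix.diagonal_one]
  have hDinvD : Dinv * D = 1 := by
    rw [hDdef, hDinvdef, Matrix.diagonal_mul_diagonal]
    have : (fun i => ((b i : ℂ))⁻¹ * (b i : ℂ)) = fun _ => (1:ℂ) :=
      funext fun i => inv_mul_cancel₀ (hbne i)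
    rw [this, Matrix.diagonal_one]
  have hAdA : Ad * A = 1 := by
    have h : ∀ v, (Ad * A) *ᵥ v = v := by
      intro v
      apply hinj
      rw [Matrix.mulVec_mulVec, ← Matrix.mul_assoc, hA1]
    ext i j
    have := congrFun (h (Pi.single j 1)) i
    simpa [Matrix.mulVec_single, Matrix.one_apply, Pi.single_apply, eq_comm] using this
  have hAHAdH : Aᴴ * Adᴴ = 1 := by
    rw [← Matrix.conjTranspose_mul, hAdA, Matrix.conjTranspose_one]
  have hPLdiag : ∀ X ∈ phaseLiftFeasible A b, ∀ i, (A*X*Aᴴ) i i = ((b i:ℂ))^2 := by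
    intro X hX i
    rw [← trace_vmv A X i]
    exact hX.2 i
  -- The map Ψ(X) = Dinv*A*X*Aᴴ*Dinv sends PhaseLift-feasible to PhaseCutMod-feasible
  have hΨmem : ∀ X ∈ phaseLiftFeasible A b,
      Dinv*A*X*Aᴴ*Dinv ∈ phaseCutModFeasible A Ad b := by
    intro X hX
    simp only [phaseCutModFeasible, Set.mem_setOf_eq, ← hDdef]
    refine ⟨?_, ?_, ?_⟩
    · have hpsd := hX.1.mul_mul_conjTranspose_same (Dinv * A)
      have e : (Dinv*A) * X * (Dinv*A)ᴴ = Dinv*A*X*Aᴴ*Dinv := by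
        rw [Matrix.conjTranspose_mul, hDinvH, ← Matrix.mul_assoc]
      rwa [e] at hpsd
    · intro i
      have hd := hPLdiag X hX i
      have e : Dinv*A*X*Aᴴ*Dinv = Dinv*(A*X*Aᴴ)*Dinv := by
        simp only [Matrix.mul_assoc]
      rw [e, hDinvdef]
      simp only [Matrix.mul_diagonal, Matrix.diagonal_mul, hd]
      rw [sq]
      field_simp
      exact div_self (hbne i)
    · have h0 : (1 - A*Ad) * A = 0 := by
        rw [Matrix.sub_mul, Matrix.one_mul, hA1, sub_self]
      have e1 : D*(1-A*Ad)*D*(Dinv*A*X*Aᴴ*Dinv)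
          = D*(1-A*Ad)*(D*Dinv)*(A*(X*(Aᴴ*Dinv))) := by
        simp only [Matrix.mul_assoc]
      rw [e1, hDDinv, Matrix.mul_one]
      have e2 : D*(1-A*Ad)*(A*(X*(Aᴴ*Dinv)))
          = D*((1-A*Ad)*A)*(X*(Aᴴ*Dinv)) := by
        simp only [Matrix.mul_assoc]
      rw [e2, h0, Matrix.mul_zero, Matrix.zero_mul, Matrix.trace_zero]
  -- Ψ preserves objective values
  have hΨtr : ∀ X : Matrix (Fin p) (Fin p) ℂ,
      Matrix.trace (D*Adᴴ*Ad*D*(Dinv*A*X*Aᴴ*Dinv)) = Matrix.trace X := by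
    intro X
    have e1 : D*Adᴴ*Ad*D*(Dinv*A*X*Aᴴ*Dinv)
        = D*Adᴴ*Ad*(D*Dinv)*(A*(X*(Aᴴ*Dinv))) := by
      simp only [Matrix.mul_assoc]
    rw [e1, hDDinv, Matrix.mul_one]
    have e2 : D*Adᴴ*Ad*(A*(X*(Aᴴ*Dinv))) = D*Adᴴ*(Ad*A)*(X*(Aᴴ*Dinv)) := by
      simp only [Matrix.mul_assoc]
    rw [e2, hAdA, Matrix.mul_one]
    have e3 : D*Adᴴ*(X*(Aᴴ*Dinv)) = D*(Adᴴ*X*Aᴴ)*Dinv := by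
      simp only [Matrix.mul_assoc]
    rw [e3, Matrix.trace_mul_comm, ← Matrix.mul_assoc, hDinvD, Matrix.one_mul,
      Matrix.trace_mul_cycle, hAHAdH, Matrix.one_mul]
  -- The key annihilation fact for PhaseCutMod-feasible U
  have hPDU : ∀ U ∈ phaseCutModFeasible A Ad b, (1 - A*Ad) * (D*U) = 0 := by
    intro U hU
    obtain ⟨hU1, hU2, hU3⟩ := hU
    rw [← hDdef] at hU3
    obtain ⟨S, hS⟩ : ∃ S : Matrix (Fin n) (Fin n) ℂ, U = Sᴴ * S := by
      open scoped MatrixOrder Matrix.Norms.L2Operator in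
      obtain ⟨B, hB⟩ := CStarAlgebra.nonneg_iff_eq_star_mul_self.mp hU1.nonneg
      exact ⟨B, hB⟩
    have hQ : (A*Ad)*(A*Ad) = A*Ad := by rw [← Matrix.mul_assoc, hA1]
    have hPH : (1 - A*Ad)ᴴ = 1 - A*Ad := by
      rw [Matrix.conjTranspose_sub, Matrix.conjTranspose_one, hA3]
    have hPP : (1 - A*Ad)*(1 - A*Ad) = 1 - A*Ad := by
      rw [Matrix.mul_sub, Matrix.mul_one, Matrix.sub_mul, Matrix.one_mul, hQ,
        sub_self, sub_zero]
    have hTH : (S*(D*(1-A*Ad)))ᴴ = (1-A*Ad)*(D*Sᴴ) := by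
      rw [Matrix.conjTranspose_mul, Matrix.conjTranspose_mul, hPH, hDH, Matrix.mul_assoc]
    have htr : Matrix.trace ((S*(D*(1-A*Ad)))ᴴ * (S*(D*(1-A*Ad))))
        = Matrix.trace (D*(1-A*Ad)*D*U) := by
      rw [hTH, hS, Matrix.trace_mul_comm]
      have e : (S*(D*(1-A*Ad))) * ((1-A*Ad)*(D*Sᴴ))
          = S*(D*(((1-A*Ad)*(1-A*Ad))*(D*Sᴴ))) := by
        simp only [Matrix.mul_assoc]
      rw [e, hPP, Matrix.trace_mul_comm]
      simp only [Matrix.mul_assoc]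
    have hT0 : S*(D*(1-A*Ad)) = 0 :=
      trace_hmul_self_zero _ (by rw [htr, hU3])
    calc (1-A*Ad)*(D*U) = ((1-A*Ad)*(D*Sᴴ))*S := by
          rw [hS]; simp only [Matrix.mul_assoc]
      _ = (S*(D*(1-A*Ad)))ᴴ * S := by rw [hTH]
      _ = 0 := by rw [hT0, Matrix.conjTranspose_zero, Matrix.zero_mul]
  -- Consequence: A * Φ(U) * Aᴴ = D U D for feasible U
  have hAXA : ∀ U ∈ phaseCutModFeasible A Ad b, A*(Ad*D*U*D*Adᴴ)*Aᴴ = D*U*D := by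
    intro U hU
    have hUH : Uᴴ = U := hU.1.1
    have h1 : A*Ad*(D*U) = D*U := by
      have h := hPDU U hU
      rw [Matrix.sub_mul, Matrix.one_mul, sub_eq_zero] at h
      exact h.symm
    have h2 : (U*D)*(A*Ad) = U*D := by
      have h := congrArg Matrix.conjTranspose h1
      rwa [Matrix.conjTranspose_mul, Matrix.conjTranspose_mul, hA3, hUH, hDH] at h
    calc A*(Ad*D*U*D*Adᴴ)*Aᴴ
        = (A*Ad*(D*U))*(D*(Adᴴ*Aᴴ)) := by simp only [Matrix.mul_assoc]
      _ = (D*U)*(D*(A*Ad)ᴴ) := by rw [h1, ← Matrix.conjTranspose_mul]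
      _ = (D*U)*(D*(A*Ad)) := by rw [hA3]
      _ = D*((U*D)*(A*Ad)) := by simp only [Matrix.mul_assoc]
      _ = D*(U*D) := by rw [h2]
      _ = D*U*D := by simp only [Matrix.mul_assoc]
  -- The map Φ(U) = Ad*D*U*D*Adᴴ sends PhaseCutMod-feasible to PhaseLift-feasible
  have hΦmem : ∀ U ∈ phaseCutModFeasible A Ad b,
      Ad*D*U*D*Adᴴ ∈ phaseLiftFeasible A b := by
    intro U hU
    obtain ⟨hU1, hU2, _⟩ := hU
    simp only [phaseLiftFeasible, Set.mem_setOf_eq]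
    constructor
    · have hpsd := hU1.mul_mul_conjTranspose_same (Ad * D)
      have e : (Ad*D) * U * (Ad*D)ᴴ = Ad*D*U*D*Adᴴ := by
        rw [Matrix.conjTranspose_mul, hDH, ← Matrix.mul_assoc]
      rwa [e] at hpsd
    · intro i
      rw [trace_vmv, hAXA U ⟨hU1, hU2, by assumption⟩]
      rw [hDdef]
      simp only [Matrix.mul_diagonal, Matrix.diagonal_mul, hU2 i]
      ring
  -- Φ has the same objective value
  have hΦtr : ∀ U : Matrix (Fin n) (Fin n) ℂ,
      Matrix.trace (Ad*D*U*D*Adᴴ) = Matrix.trace (D*Adᴴ*Ad*D*U) := by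
    intro U
    rw [Matrix.trace_mul_cycle, Matrix.trace_mul_cycle]
    simp only [Matrix.mul_assoc]
  -- Ψ ∘ Φ = id on the feasible set
  have hΨΦ : ∀ U ∈ phaseCutModFeasible A Ad b,
      Dinv*A*(Ad*D*U*D*Adᴴ)*Aᴴ*Dinv = U := by
    intro U hU
    have e : Dinv*A*(Ad*D*U*D*Adᴴ)*Aᴴ*Dinv = Dinv*(A*(Ad*D*U*D*Adᴴ)*Aᴴ)*Dinv := by
      simp only [Matrix.mul_assoc]
    rw [e, hAXA U hU]
    calc Dinv*(D*U*D)*Dinv = (Dinv*D)*(U*(D*Dinv)) := by simp only [Matrix.mul_assoc]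
      _ = U := by rw [hDinvD, hDDinv, Matrix.one_mul, Matrix.mul_one]
  -- Φ ∘ Ψ = id everywhere
  have hΦΨ : ∀ X : Matrix (Fin p) (Fin p) ℂ,
      Ad*D*(Dinv*A*X*Aᴴ*Dinv)*D*Adᴴ = X := by
    intro X
    calc Ad*D*(Dinv*A*X*Aᴴ*Dinv)*D*Adᴴ
        = Ad*((D*Dinv)*(A*(X*((Aᴴ*(Dinv*D))*Adᴴ)))) := by simp only [Matrix.mul_assoc]
      _ = (Ad*A)*(X*(Aᴴ*Adᴴ)) := by
          rw [hDDinv, hDinvD, Matrix.one_mul, Matrix.mul_one]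
          simp only [Matrix.mul_assoc]
      _ = X := by rw [hAdA, hAHAdH, Matrix.one_mul, Matrix.mul_one]
  refine ⟨Dinv*A*Xs*Aᴴ*Dinv, hΨmem Xs hXsF, ?_, ?_, ?_⟩
  · -- rank one
    have hle : (Dinv*A*Xs*Aᴴ*Dinv).rank ≤ Xs.rank :=
      le_trans (Matrix.rank_mul_le_left _ _)
        (le_trans (Matrix.rank_mul_le_left _ _) (Matrix.rank_mul_le_right _ _))
    have hge : Xs.rank ≤ (Dinv*A*Xs*Aᴴ*Dinv).rank := by
      have h := le_trans (Matrix.rank_mul_le_left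
          (Ad*D*(Dinv*A*Xs*Aᴴ*Dinv)*D) Adᴴ)
        (le_trans (Matrix.rank_mul_le_left _ _) (Matrix.rank_mul_le_right _ _))
      rwa [hΦΨ Xs] at h
    omega
  · -- optimality
    intro U hU
    rw [hΨtr Xs, ← hΦtr U]
    exact hXsOpt _ (hΦmem U hU)
  · -- uniqueness
    intro U hU hUopt
    have hXeq : Ad*D*U*D*Adᴴ = Xs := by
      apply hXsUniq _ (hΦmem U hU)
      intro Y hY
      have h := hUopt _ (hΨmem Y hY)
      rwa [hΨtr Y, ← hΦtr U] at h
    calc U = Dinv*A*(Ad*D*U*D*Adᴴ)*Aᴴ*Dinv := (hΨΦ U hU).symm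
      _ = Dinv*A*Xs*Aᴴ*Dinv := by rw [hXeq]
end

section
/- Let A ∈ ℂ^{n×p}, x₀ ∈ ℂ^p, b_noise ∈ ℝⁿ, and set b = |Ax₀| + b_noise. If V minimizes d₁(V, F) over {V ∈ H_n : V ⪰ 0, diag(V) = b²}, then Tr(V(I − AA†)) ≤ ‖b_noise‖₂². -/
open Matrix ComplexOrder

/-- The trace (nuclear) norm: sum of singular values. -/
noncomputable def traceNorm {n : ℕ} (M : Matrix (Fin n) (Fin n) ℂ) : ℝ :=
  ∑ i, Real.sqrt ((Matrix.posSemidef_conjTranspose_mul_self M).1.eigenvalues i)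

/-- The Euclidean norm of a real vector. -/
noncomputable def rvecNorm {n : ℕ} (v : Fin n → ℝ) : ℝ :=
  Real.sqrt (∑ i, (v i) ^ 2)

/-- `F = {V ∈ H_n : (I − AA†)V(I − AA†) = 0}`. -/
def Fset {n p : ℕ} (A : Matrix (Fin n) (Fin p) ℂ) (Ad : Matrix (Fin p) (Fin n) ℂ) :
    Set (Matrix (Fin n) (Fin n) ℂ) :=
  {V | V.IsHermitian ∧ (1 - A * Ad) * V * (1 - A * Ad) = 0}

/-- Trace-norm distance from `V` to `F`. -/
noncomputable def d1F {n p : ℕ} (A : Matrix (Fin n) (Fin p) ℂ)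
    (Ad : Matrix (Fin p) (Fin n) ℂ) (V : Matrix (Fin n) (Fin n) ℂ) : ℝ :=
  sInf {r : ℝ | ∃ W ∈ Fset A Ad, r = traceNorm (V - W)}

/-! ### Auxiliary lemmas -/

noncomputable def cnorm {n : ℕ} (v : Fin n → ℂ) : ℝ := Real.sqrt (star v ⬝ᵥ v).re

lemma cnorm_eq {n : ℕ} (v : Fin n → ℂ) :
    cnorm v = ‖(WithLp.equiv 2 (Fin n → ℂ)).symm v‖ := by
  rw [@norm_eq_sqrt_re_inner ℂ, cnorm, dotProduct_comm]
  rfl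

lemma abs_dot_le {n : ℕ} (a b : Fin n → ℂ) :
    ‖star a ⬝ᵥ b‖ ≤ cnorm a * cnorm b := by
  rw [cnorm_eq, cnorm_eq, dotProduct_comm]
  exact norm_inner_le_norm (𝕜 := ℂ) ((WithLp.equiv 2 (Fin n → ℂ)).symm a)
    ((WithLp.equiv 2 (Fin n → ℂ)).symm b)

lemma psd_of_proj {n : ℕ} {Q : Matrix (Fin n) (Fin n) ℂ} (hH : Qᴴ = Q) (h2 : Q * Q = Q) :
    Q.PosSemidef := by
  have := Matrix.posSemidef_conjTranspose_mul_self Q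
  rwa [hH, h2] at this

lemma dot_self_eigenvectorBasis {n : ℕ} {B : Matrix (Fin n) (Fin n) ℂ} (hB : B.IsHermitian)
    (j : Fin n) : star ⇑(hB.eigenvectorBasis j) ⬝ᵥ ⇑(hB.eigenvectorBasis j) = 1 := by
  have h := orthonormal_iff_ite.mp hB.eigenvectorBasis.orthonormal j j
  simp only [if_pos rfl] at h
  rw [EuclideanSpace.inner_eq_star_dotProduct] at h
  rw [if_pos trivial] at h; rw [dotProduct_comm]; exact h

lemma trace_eq_sum_vecs {n : ℕ} {B : Matrix (Fin n) (Fin n) ℂ} (hB : B.IsHermitian)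
    (X : Matrix (Fin n) (Fin n) ℂ) :
    Matrix.trace X = ∑ j, star ⇑(hB.eigenvectorBasis j) ⬝ᵥ X *ᵥ ⇑(hB.eigenvectorBasis j) := by
  classical
  have hU : (hB.eigenvectorUnitary : Matrix (Fin n) (Fin n) ℂ) *
      star (hB.eigenvectorUnitary : Matrix (Fin n) (Fin n) ℂ) = 1 :=
    Matrix.mem_unitaryGroup_iff.mp hB.eigenvectorUnitary.2
  have h1 : ∀ l k : Fin n, (∑ j, (hB.eigenvectorUnitary : Matrix (Fin n) (Fin n) ℂ) l j *
      star ((hB.eigenvectorUnitary : Matrix (Fin n) (Fin n) ℂ) k j)) = if l = k then 1 else 0 := by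
    intro l k
    have := congrFun (congrFun hU l) k
    simpa [Matrix.mul_apply, Matrix.one_apply] using this
  have hw : ∀ (j i : Fin n), ⇑(hB.eigenvectorBasis j) i =
      (hB.eigenvectorUnitary : Matrix (Fin n) (Fin n) ℂ) i j := by
    intro j i; rfl
  calc Matrix.trace X = ∑ k, X k k := rfl
    _ = ∑ j, star ⇑(hB.eigenvectorBasis j) ⬝ᵥ X *ᵥ ⇑(hB.eigenvectorBasis j) := by
      simp only [dotProduct, Matrix.mulVec, Pi.star_apply, hw]
      rw [Finset.sum_comm]
      congr 1; ext k
      have : ∀ j, star ((hB.eigenvectorUnitary : Matrix (Fin n) (Fin n) ℂ) k j) *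
          (∑ l, X k l * (hB.eigenvectorUnitary : Matrix (Fin n) (Fin n) ℂ) l j)
          = ∑ l, X k l * ((hB.eigenvectorUnitary : Matrix (Fin n) (Fin n) ℂ) l j *
            star ((hB.eigenvectorUnitary : Matrix (Fin n) (Fin n) ℂ) k j)) := by
        intro j; rw [Finset.mul_sum]; congr 1; ext l; ring
      rw [Finset.sum_congr rfl fun j _ => this j, Finset.sum_comm]
      simp only [← Finset.mul_sum, h1]
      simp

lemma dot_mulVec_eq {n : ℕ} (R : Matrix (Fin n) (Fin n) ℂ) (a b : Fin n → ℂ) :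
    star a ⬝ᵥ R *ᵥ b = star (Rᴴ *ᵥ a) ⬝ᵥ b := by
  rw [Matrix.star_mulVec, Matrix.conjTranspose_conjTranspose, Matrix.dotProduct_mulVec]

lemma contraction_re {n : ℕ} {Q : Matrix (Fin n) (Fin n) ℂ}
    (hQH : Qᴴ = Q) (hQ2 : Q * Q = Q) (hQle : (1 - Q).PosSemidef) (v : Fin n → ℂ) :
    (star (Q *ᵥ v) ⬝ᵥ (Q *ᵥ v)).re ≤ (star v ⬝ᵥ v).re := by
  have h := dot_mulVec_eq Q v (Q *ᵥ v)
  rw [hQH, Matrix.mulVec_mulVec, hQ2] at h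
  rw [← h]
  have e2 : 0 ≤ (star v ⬝ᵥ (1 - Q) *ᵥ v).re := (Complex.le_def.mp (hQle.dotProduct_mulVec_nonneg v)).1
  rw [Matrix.sub_mulVec, Matrix.one_mulVec, dotProduct_sub, Complex.sub_re] at e2
  linarith

lemma re_trace_le_traceNorm {n : ℕ} (M Q : Matrix (Fin n) (Fin n) ℂ)
    (hQH : Qᴴ = Q) (hQ2 : Q * Q = Q) (hQle : (1 - Q).PosSemidef) :
    (Matrix.trace (Q * M)).re ≤ traceNorm M := by
  have hB : (Mᴴ * M).IsHermitian := (Matrix.posSemidef_conjTranspose_mul_self M).1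
  rw [trace_eq_sum_vecs hB]
  have key : ∀ j, (star ⇑(hB.eigenvectorBasis j) ⬝ᵥ (Q * M) *ᵥ ⇑(hB.eigenvectorBasis j)).re
      ≤ Real.sqrt (hB.eigenvalues j) := by
    intro j
    set w : Fin n → ℂ := ⇑(hB.eigenvectorBasis j) with hwdef
    have hw1 : star w ⬝ᵥ w = 1 := dot_self_eigenvectorBasis hB j
    have hsplit : star w ⬝ᵥ (Q * M) *ᵥ w = star (Q *ᵥ w) ⬝ᵥ (M *ᵥ w) := by
      rw [← Matrix.mulVec_mulVec, dot_mulVec_eq, hQH]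
    have hMw : star (M *ᵥ w) ⬝ᵥ (M *ᵥ w) = (hB.eigenvalues j : ℂ) := by
      have h := dot_mulVec_eq Mᴴ w (M *ᵥ w)
      rw [Matrix.conjTranspose_conjTranspose, Matrix.mulVec_mulVec] at h
      rw [← h, hwdef, hB.mulVec_eigenvectorBasis, dotProduct_smul, ← hwdef, hw1]
      simp [Complex.real_smul]
    have hcMw : cnorm (M *ᵥ w) = Real.sqrt (hB.eigenvalues j) := by
      rw [cnorm, hMw, Complex.ofReal_re]
    have hQw : cnorm (Q *ᵥ w) ≤ 1 := by
      rw [cnorm]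
      rw [show (1:ℝ) = Real.sqrt 1 from (Real.sqrt_one).symm]
      apply Real.sqrt_le_sqrt
      have := contraction_re hQH hQ2 hQle w
      rw [hw1] at this
      simpa using this
    calc (star w ⬝ᵥ (Q * M) *ᵥ w).re ≤ ‖star w ⬝ᵥ (Q * M) *ᵥ w‖ :=
          Complex.re_le_norm _
      _ = ‖star (Q *ᵥ w) ⬝ᵥ (M *ᵥ w)‖ := by rw [hsplit]
      _ ≤ cnorm (Q *ᵥ w) * cnorm (M *ᵥ w) := abs_dot_le _ _
      _ ≤ 1 * Real.sqrt (hB.eigenvalues j) := by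
          rw [hcMw]
          exact mul_le_mul_of_nonneg_right hQw (Real.sqrt_nonneg _)
      _ = Real.sqrt (hB.eigenvalues j) := one_mul _
  calc (∑ j, star ⇑(hB.eigenvectorBasis j) ⬝ᵥ (Q * M) *ᵥ ⇑(hB.eigenvectorBasis j)).re
      = ∑ j, (star ⇑(hB.eigenvectorBasis j) ⬝ᵥ (Q * M) *ᵥ ⇑(hB.eigenvectorBasis j)).re := by
        rw [Complex.re_sum]
    _ ≤ ∑ j, Real.sqrt (hB.eigenvalues j) := Finset.sum_le_sum fun j _ => key j
    _ = traceNorm M := rfl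

lemma traceNorm_nonneg {n : ℕ} (M : Matrix (Fin n) (Fin n) ℂ) : 0 ≤ traceNorm M :=
  Finset.sum_nonneg fun _ _ => Real.sqrt_nonneg _

lemma traceNorm_vecMulVec_le {n : ℕ} (u : Fin n → ℂ) :
    traceNorm (vecMulVec u (star u)) ≤ (star u ⬝ᵥ u).re := by
  classical
  set c : ℝ := (star u ⬝ᵥ u).re with hcdef
  have hcC : star u ⬝ᵥ u = (c : ℂ) := by
    have : star u ⬝ᵥ u = ((∑ i, Complex.normSq (u i) : ℝ) : ℂ) := by
      rw [dotProduct, Complex.ofReal_sum]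
      congr 1; ext i
      simp [Complex.normSq_eq_conj_mul_self]
    rw [this, hcdef, this]
    simp
  have hc0 : 0 ≤ c := by
    have h2 : c = ∑ i, Complex.normSq (u i) := by
      rw [hcdef]
      rw [show star u ⬝ᵥ u = ((∑ i, Complex.normSq (u i) : ℝ) : ℂ) by
        rw [dotProduct, Complex.ofReal_sum]
        congr 1; ext i
        simp [Complex.normSq_eq_conj_mul_self]]
      simp
    rw [h2]
    exact Finset.sum_nonneg fun i _ => Complex.normSq_nonneg _
  set S := vecMulVec u (star u) with hSdef
  have hSH : Sᴴ = S := by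
    ext i j
    simp [hSdef, Matrix.vecMulVec_apply, Matrix.conjTranspose_apply, mul_comm]
  have hSS : S * S = (c : ℂ) • S := by
    ext i j
    rw [Matrix.mul_apply]
    simp only [hSdef, Matrix.vecMulVec_apply, Matrix.smul_apply, smul_eq_mul]
    rw [← hcC, dotProduct, Finset.sum_mul]
    congr 1; ext k
    simp only [Pi.star_apply]
    ring
  have hBeq : Sᴴ * S = (c : ℂ) • S := by rw [hSH, hSS]
  have hB : (Sᴴ * S).IsHermitian := (Matrix.posSemidef_conjTranspose_mul_self S).1
  set μ : Fin n → ℝ := hB.eigenvalues with hμdef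
  have hμ0 : ∀ j, 0 ≤ μ j := fun j =>
    (Matrix.posSemidef_conjTranspose_mul_self S).eigenvalues_nonneg j
  have d1 : ∀ j, star ⇑(hB.eigenvectorBasis j) ⬝ᵥ (Sᴴ * S) *ᵥ ⇑(hB.eigenvectorBasis j)
      = (μ j : ℂ) := by
    intro j
    rw [hB.mulVec_eigenvectorBasis, dotProduct_smul, dot_self_eigenvectorBasis hB j]
    simp [Complex.real_smul, hμdef]
  have quad : ∀ j, μ j ^ 2 = (c * c) * μ j := by
    intro j
    have hve := hB.mulVec_eigenvectorBasis j
    have d2 : star ⇑(hB.eigenvectorBasis j) ⬝ᵥ ((Sᴴ * S) * (Sᴴ * S)) *ᵥ ⇑(hB.eigenvectorBasis j)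
        = (μ j : ℂ) * (μ j : ℂ) := by
      rw [← Matrix.mulVec_mulVec, hve, Matrix.mulVec_smul, hve, dotProduct_smul,
        dotProduct_smul, dot_self_eigenvectorBasis hB j]
      simp [Complex.real_smul, hμdef]
    have d3 : (Sᴴ * S) * (Sᴴ * S) = ((c : ℂ) * c) • (Sᴴ * S) := by
      rw [hBeq, smul_mul_assoc, mul_smul_comm, hSS, smul_smul, smul_smul]
    have d4 : star ⇑(hB.eigenvectorBasis j) ⬝ᵥ ((((c : ℂ) * c) • (Sᴴ * S)) *ᵥ ⇑(hB.eigenvectorBasis j))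
        = ((c : ℂ) * c) * (μ j : ℂ) := by
      rw [Matrix.smul_mulVec, dotProduct_smul, d1 j]
      simp
    have hC : (μ j : ℂ) * (μ j : ℂ) = ((c : ℂ) * c) * (μ j : ℂ) := by rw [← d2, d3, d4]
    have hR : μ j * μ j = (c * c) * μ j := by exact_mod_cast hC
    rw [pow_two]; exact hR
  have hsum : ∑ j, μ j = c * c := by
    have t1 : Matrix.trace (Sᴴ * S) = ∑ j, ((μ j : ℂ)) := by
      rw [trace_eq_sum_vecs hB (Sᴴ * S)]
      exact Finset.sum_congr rfl fun j _ => d1 j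
    have htrS : Matrix.trace S = (c : ℂ) := by
      rw [← hcC, Matrix.trace, dotProduct]
      exact Finset.sum_congr rfl fun i _ => by
        simp [hSdef, Matrix.diag_apply, Matrix.vecMulVec_apply, mul_comm]
    have t2 : Matrix.trace (Sᴴ * S) = ((c * c : ℝ) : ℂ) := by
      rw [hBeq, Matrix.trace_smul, htrS]
      push_cast
      simp [smul_eq_mul]
    have t3 : ((∑ j, μ j : ℝ) : ℂ) = ((c * c : ℝ) : ℂ) := by
      push_cast
      rw [← t1, t2]
      push_cast
      ring
    exact_mod_cast t3
  show ∑ j, Real.sqrt (μ j) ≤ c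
  rcases hc0.eq_or_lt with h0 | hpos
  · have hz : ∀ j ∈ Finset.univ, μ j = 0 := by
      rw [← Finset.sum_eq_zero_iff_of_nonneg fun j _ => hμ0 j]
      rw [hsum, ← h0, mul_zero]
    rw [Finset.sum_congr rfl fun j hj => by rw [hz j hj, Real.sqrt_zero]]
    simp [← h0]
  · have hsq : ∀ j, Real.sqrt (μ j) = μ j / c := by
      intro j
      rcases eq_or_ne (μ j) 0 with hz | hnz
      · rw [hz, Real.sqrt_zero, zero_div]
      · have : μ j = c * c := by
          have := quad j
          rw [pow_two] at this
          exact mul_right_cancel₀ hnz (by linarith [this])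
        rw [this, Real.sqrt_mul_self hc0, mul_div_assoc, div_self hpos.ne', mul_one]
    rw [Finset.sum_congr rfl fun j _ => hsq j, ← Finset.sum_div, hsum, mul_div_assoc,
      div_self hpos.ne', mul_one]

lemma mul_vecMulVec_mul {n : ℕ} {Q : Matrix (Fin n) (Fin n) ℂ} (hQH : Qᴴ = Q)
    (z : Fin n → ℂ) :
    Q * vecMulVec z (star z) * Q = vecMulVec (Q *ᵥ z) (star (Q *ᵥ z)) := by
  classical
  have hq : ∀ l j : Fin n, Q l j = star (Q j l) := by
    intro l j
    conv_lhs => rw [← hQH]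
    rw [Matrix.conjTranspose_apply]
  ext i j
  simp only [Matrix.mul_apply, Matrix.vecMulVec_apply, Matrix.mulVec, dotProduct,
    Pi.star_apply, star_sum, star_mul']
  rw [Finset.sum_mul_sum]
  rw [Finset.sum_comm]
  refine Finset.sum_congr rfl fun l _ => ?_
  rw [Finset.sum_mul]
  refine Finset.sum_congr rfl fun k _ => ?_
  rw [hq l j]
  ring

/-- Let `b = |Ax₀| + b_noise`. If `V` minimizes `d₁(·, F)` over
`{V ⪰ 0 : diag(V) = b²}`, then `Tr(V(I − AA†)) ≤ ‖b_noise‖₂²`. -/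
theorem trace_V_perp_le {n p : ℕ}
    (A : Matrix (Fin n) (Fin p) ℂ) (Ad : Matrix (Fin p) (Fin n) ℂ)
    (hPenrose : A * Ad * A = A ∧ Ad * A * Ad = Ad ∧
      (A * Ad)ᴴ = A * Ad ∧ (Ad * A)ᴴ = Ad * A)
    (x₀ : Fin p → ℂ) (bnoise : Fin n → ℝ)
    (b : Fin n → ℝ) (hb : b = fun i => ‖A.mulVec x₀ i‖ + bnoise i)
    (V : Matrix (Fin n) (Fin n) ℂ)
    (hVpsd : V.PosSemidef) (hVdiag : ∀ i, V i i = ((b i : ℂ)) ^ 2)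
    (hVmin : ∀ V' : Matrix (Fin n) (Fin n) ℂ, V'.PosSemidef →
      (∀ i, V' i i = ((b i : ℂ)) ^ 2) → d1F A Ad V ≤ d1F A Ad V') :
    (Matrix.trace (V * (1 - A * Ad))).re ≤ (rvecNorm bnoise) ^ 2 := by
  classical
  set Q : Matrix (Fin n) (Fin n) ℂ := 1 - A * Ad with hQdef
  have hP2 : (A * Ad) * (A * Ad) = A * Ad := by
    rw [← Matrix.mul_assoc, hPenrose.1]
  have hQH : Qᴴ = Q := by
    rw [hQdef, Matrix.conjTranspose_sub, Matrix.conjTranspose_one, hPenrose.2.2.1]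
  have hQ2 : Q * Q = Q := by
    rw [hQdef]
    simp only [Matrix.sub_mul, Matrix.mul_sub, Matrix.one_mul, Matrix.mul_one, one_mul, mul_one,
      hP2]
    abel
  have hQle : (1 - Q).PosSemidef := by
    rw [hQdef, sub_sub_cancel]
    exact psd_of_proj hPenrose.2.2.1 hP2
  have hQpsd : Q.PosSemidef := psd_of_proj hQH hQ2
  have hQA : Q * A = 0 := by
    rw [hQdef, Matrix.sub_mul, Matrix.one_mul, hPenrose.1, sub_self]
  -- lower bound : Tr(VQ).re ≤ d1F V
  have hlow : (Matrix.trace (V * Q)).re ≤ d1F A Ad V := by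
    refine le_csInf ?_ ?_
    · exact ⟨traceNorm (V - 0), 0, ⟨Matrix.isHermitian_zero, by simp⟩, rfl⟩
    rintro r ⟨W, ⟨hWH, hWF⟩, rfl⟩
    have hWQ : Matrix.trace (W * Q) = 0 := by
      calc Matrix.trace (W * Q) = Matrix.trace (W * (Q * Q)) := by rw [hQ2]
        _ = Matrix.trace ((W * Q) * Q) := by rw [Matrix.mul_assoc]
        _ = Matrix.trace (Q * (W * Q)) := (Matrix.trace_mul_comm _ _).symm
        _ = Matrix.trace ((Q * W) * Q) := by rw [Matrix.mul_assoc]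
        _ = 0 := by rw [← hQdef] at hWF; rw [hWF, Matrix.trace_zero]
    have hVW : Matrix.trace (V * Q) = Matrix.trace (Q * (V - W)) := by
      rw [Matrix.trace_mul_comm, Matrix.mul_sub, Matrix.trace_sub,
        Matrix.trace_mul_comm Q W, ← Matrix.trace_mul_comm V Q, hWQ, sub_zero]
    rw [hVW]
    exact re_trace_le_traceNorm _ _ hQH hQ2 hQle
  -- construction of V₀
  set y : Fin n → ℂ := A *ᵥ x₀ with hydef
  set ph : Fin n → ℂ := fun i => if y i = 0 then 1 else y i / (‖y i‖ : ℂ) with hphdef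
  have habs : ∀ i, ‖ph i‖ = 1 := by
    intro i
    by_cases h : y i = 0
    · simp [hphdef, h]
    · have hy0 : ‖y i‖ ≠ 0 := by simpa using h
      simp [hphdef, h, norm_div, Complex.norm_real, div_self hy0]
  have hnormSqph : ∀ i, Complex.normSq (ph i) = 1 := by
    intro i
    rw [Complex.normSq_eq_norm_sq, habs, one_pow]
  have hy : ∀ i, y i = (‖y i‖ : ℂ) * ph i := by
    intro i
    by_cases h : y i = 0
    · simp [hphdef, h]
    · have hy0 : (‖y i‖ : ℂ) ≠ 0 := by
        simpa [Complex.ofReal_eq_zero] using h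
      rw [hphdef]
      simp only [h, if_neg, ite_false]
      field_simp
  set z : Fin n → ℂ := fun i => (b i : ℂ) * ph i with hzdef
  set δ : Fin n → ℂ := fun i => (bnoise i : ℂ) * ph i with hδdef
  have hzyδ : z = y + δ := by
    funext i
    simp only [hzdef, hδdef, Pi.add_apply, hb]
    push_cast
    rw [add_mul, ← hy i]
  set V₀ : Matrix (Fin n) (Fin n) ℂ := vecMulVec z (star z) with hV₀def
  have hV₀H : V₀ᴴ = V₀ := by
    ext i j
    simp [hV₀def, Matrix.vecMulVec_apply, Matrix.conjTranspose_apply, mul_comm]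
  have hV₀psd : V₀.PosSemidef := by
    refine Matrix.PosSemidef.of_dotProduct_mulVec_nonneg hV₀H fun x => ?_
    have hmv : V₀ *ᵥ x = (star z ⬝ᵥ x) • z := by
      funext i
      simp only [hV₀def, Matrix.mulVec, dotProduct, Matrix.vecMulVec_apply,
        Pi.smul_apply, smul_eq_mul, Finset.mul_sum]
      rw [Finset.sum_mul]
      refine Finset.sum_congr rfl fun k _ => ?_
      simp only [Pi.star_apply]
      ring
    rw [hmv, dotProduct_smul, smul_eq_mul]
    have hxz : star x ⬝ᵥ z = star (star z ⬝ᵥ x) := by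
      simp only [dotProduct, star_sum, star_mul', star_star, Pi.star_apply]
      exact Finset.sum_congr rfl fun k _ => by ring
    rw [hxz]
    exact mul_star_self_nonneg _
  have hV₀diag : ∀ i, V₀ i i = ((b i : ℂ)) ^ 2 := by
    intro i
    have : V₀ i i = z i * star (z i) := by simp [hV₀def, Matrix.vecMulVec_apply]
    rw [this]
    have : z i * star (z i) = ((Complex.normSq (z i) : ℝ) : ℂ) := by
      rw [show star (z i) = (starRingEnd ℂ) (z i) from rfl, Complex.mul_conj]
    rw [this, hzdef]
    simp only [Complex.normSq_mul, Complex.normSq_ofReal, hnormSqph, mul_one]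
    push_cast
    ring
  -- upper bound pieces
  have hd1V₀ : d1F A Ad V₀ ≤ traceNorm (Q * V₀ * Q) := by
    have hbdd : BddBelow {r : ℝ | ∃ W ∈ Fset A Ad, r = traceNorm (V₀ - W)} := by
      refine ⟨0, ?_⟩
      rintro r ⟨W, _, rfl⟩
      exact traceNorm_nonneg _
    have hW₀mem : (V₀ - Q * V₀ * Q) ∈ Fset A Ad := by
      constructor
      · show (V₀ - Q * V₀ * Q)ᴴ = V₀ - Q * V₀ * Q
        rw [Matrix.conjTranspose_sub, hV₀H, Matrix.conjTranspose_mul, Matrix.conjTranspose_mul,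
          hQH, hV₀H, Matrix.mul_assoc]
      · have hzero : ∀ (R X : Matrix (Fin n) (Fin n) ℂ), R * R = R →
            R * (X - R * X * R) * R = 0 := by
          intro R X h2
          have hh : R * (X - R * X * R) * R = R * X * R - (R * R) * X * (R * R) := by
            noncomm_ring
          rw [hh, h2, sub_self]
        exact hzero Q V₀ hQ2
    have hmem : traceNorm (Q * V₀ * Q) ∈
        {r : ℝ | ∃ W ∈ Fset A Ad, r = traceNorm (V₀ - W)} := by
      refine ⟨V₀ - Q * V₀ * Q, hW₀mem, ?_⟩
      rw [sub_sub_cancel]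
    exact csInf_le hbdd hmem
  -- compute Q V₀ Q and bound its trace norm
  set u : Fin n → ℂ := Q *ᵥ z with hudef
  have hQVQ : Q * V₀ * Q = vecMulVec u (star u) := by
    rw [hV₀def, mul_vecMulVec_mul hQH]
  have huδ : u = Q *ᵥ δ := by
    rw [hudef, hzyδ, Matrix.mulVec_add]
    have : Q *ᵥ y = 0 := by
      rw [hydef, Matrix.mulVec_mulVec, hQA, Matrix.zero_mulVec]
    rw [this, zero_add]
  have hcontr : (star u ⬝ᵥ u).re ≤ (star δ ⬝ᵥ δ).re := by
    rw [huδ]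
    exact contraction_re hQH hQ2 hQle δ
  have hδnorm : (star δ ⬝ᵥ δ).re = ∑ i, (bnoise i) ^ 2 := by
    have : star δ ⬝ᵥ δ = ((∑ i, (bnoise i) ^ 2 : ℝ) : ℂ) := by
      rw [dotProduct, Complex.ofReal_sum]
      refine Finset.sum_congr rfl fun i _ => ?_
      simp only [Pi.star_apply, hδdef]
      rw [show (star ((bnoise i : ℂ) * ph i)) * ((bnoise i : ℂ) * ph i)
          = ((Complex.normSq ((bnoise i : ℂ) * ph i) : ℝ) : ℂ) by
        rw [show star ((bnoise i : ℂ) * ph i) = (starRingEnd ℂ) ((bnoise i : ℂ) * ph i) from rfl,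
          mul_comm, Complex.mul_conj]]
      rw [Complex.normSq_mul, Complex.normSq_ofReal, hnormSqph, mul_one]
      norm_cast
      ring
    rw [this, Complex.ofReal_re]
  have hrv : (rvecNorm bnoise) ^ 2 = ∑ i, (bnoise i) ^ 2 := by
    rw [rvecNorm, Real.sq_sqrt (Finset.sum_nonneg fun i _ => sq_nonneg _)]
  -- final chain
  calc (Matrix.trace (V * (1 - A * Ad))).re = (Matrix.trace (V * Q)).re := by rw [hQdef]
    _ ≤ d1F A Ad V := hlow
    _ ≤ d1F A Ad V₀ := hVmin V₀ hV₀psd hV₀diag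
    _ ≤ traceNorm (Q * V₀ * Q) := hd1V₀
    _ = traceNorm (vecMulVec u (star u)) := by rw [hQVQ]
    _ ≤ (star u ⬝ᵥ u).re := traceNorm_vecMulVec_le u
    _ ≤ (star δ ⬝ᵥ δ).re := hcontr
    _ = ∑ i, (bnoise i) ^ 2 := hδnorm
    _ = (rvecNorm bnoise) ^ 2 := hrv.symm
end
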